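/- Let (E, σ, τ, ε) be a signed chord diagram whose underlying chord diagram (E, σ, τ) admits an orientation. Let m be a state and let m' be the state obtained from m by changing the marker on a single chord {x, τ x} (i.e., m' agrees with m except m' x = ¬ m x and m' (τ x) = ¬ m (τ x)). Then the numbers of components of the two smoothings differ by exactly one: |m'| = |m| + 1 or |m| = |m'| + 1. (For an orientable chord diagram every change of a single marker is an orientation-preserving Morse modification of the smoothed curve, hence changes the number of components by one.) -/

import Mathlib

open LaurentPolynomial

/-- The involution `α` on `E × Bool` matching the two ends of each base arc:
`α (x, false) = (σ x, true)` and `α (x, true) = (σ⁻¹ x, false)`. -/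
def alphaPerm {E : Type*} (σ : Equiv.Perm E) : Equiv.Perm (E × Bool) :=
  Function.Involutive.toPerm
    (fun p => if p.2 then (σ⁻¹ p.1, false) else (σ p.1, true))
    (by rintro ⟨x, _ | _⟩ <;> simp)

/-- The involution `μ_m` on `E × Bool` defined by a state `m` of a signed chord
diagram: it sends `(x, true) ↦ (τ x, false)` and `(x, false) ↦ (τ x, true)` when
`m x = ε x`, and `(x, true) ↦ (τ x, true)`, `(x, false) ↦ (τ x, false)` otherwise. -/
def muPerm {E : Type*} (τ : Equiv.Perm E) (ε m : E → Bool)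
    (hτ : ∀ x, τ (τ x) = x) (hε : ∀ x, ε (τ x) = ε x) (hm : ∀ x, m (τ x) = m x) :
    Equiv.Perm (E × Bool) :=
  Function.Involutive.toPerm
    (fun p => (τ p.1, if m p.1 = ε p.1 then !p.2 else p.2))
    (by rintro ⟨x, b⟩; by_cases h : m x = ε x <;> simp [h, hτ, hε, hm])

/-- `|m|`: the number of orbits on `E × Bool` of the subgroup of `Equiv.Perm (E × Bool)`
generated by `α` and `μ_m`, i.e. the number of components of the smoothing of the
signed chord diagram along the state `m`. -/
noncomputable def numComponents {E : Type*} [Fintype E] [DecidableEq E]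
    (σ τ : Equiv.Perm E) (ε m : E → Bool)
    (hτ : ∀ x, τ (τ x) = x) (hε : ∀ x, ε (τ x) = ε x) (hm : ∀ x, m (τ x) = m x) : ℕ :=
  Nat.card (MulAction.orbitRel.Quotient
    (Subgroup.closure {alphaPerm σ, muPerm τ ε m hτ hε hm} : Subgroup (Equiv.Perm (E × Bool)))
    (E × Bool))

/-- An orientation of a chord diagram `(E, σ, τ)`. -/
def IsOrientation {E : Type*} (σ τ : Equiv.Perm E) (c : E → Bool) : Prop :=
  ∀ x : E, c (σ x) ≠ c x ∧ c (τ x) ≠ c x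

/-- A chord diagram `(E, σ, τ)` is orientable if it admits an orientation. -/
def Orientable {E : Type*} (σ τ : Equiv.Perm E) : Prop :=
  ∃ c : E → Bool, IsOrientation σ τ c

open Equiv Equiv.Perm

section General
variable {S : Type*} [Fintype S] [DecidableEq S]

/-- The same-cycle setoid of a permutation. -/
def scSetoid (π : Perm S) : Setoid S :=
  ⟨π.SameCycle, ⟨fun p => SameCycle.refl π p, SameCycle.symm, SameCycle.trans⟩⟩

/-- Number of cycles (orbits, incl. fixed points) of a permutation. -/
noncomputable def cyc (π : Perm S) : ℕ := Nat.card (Quotient (scSetoid π))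

lemma card_quotient_eq_of_rel_iff {s t : Setoid S} (h : ∀ p q, s.r p q ↔ t.r p q) :
    Nat.card (Quotient s) = Nat.card (Quotient t) := by
  obtain rfl : s = t := Setoid.ext h
  rfl

/-- Merging two distinct classes drops the number of classes by one. -/
lemma card_quotient_merge (s t : Setoid S) (u v : S) (hne : ¬ s.r u v)
    (hiff : ∀ p q, t.r p q ↔ s.r p q ∨ (s.r p u ∧ s.r v q) ∨ (s.r p v ∧ s.r u q)) :
    Nat.card (Quotient s) = Nat.card (Quotient t) + 1 := by
  classical
  have hle : ∀ p q, s.r p q → t.r p q := fun p q h => (hiff p q).2 (Or.inl h)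
  let F : Quotient s → Quotient t := Quotient.map id hle
  have hF : ∀ p : S, F (Quotient.mk s p) = Quotient.mk t p := fun p => rfl
  have hbij : Function.Bijective
      (fun z : {z : Quotient s // z ≠ Quotient.mk s v} => F z.1) := by
    constructor
    · rintro ⟨z1, h1⟩ ⟨z2, h2⟩ h
      induction z1 using Quotient.ind
      induction z2 using Quotient.ind
      rename_i p1 p2
      simp only [hF] at h
      have ht : t.r p1 p2 := Quotient.exact h
      have h1' : ¬ s.r p1 v := fun hc => h1 (Quotient.sound hc)
      have h2' : ¬ s.r p2 v := fun hc => h2 (Quotient.sound hc)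
      rcases (hiff p1 p2).1 ht with h' | ⟨_, h'⟩ | ⟨h', _⟩
      · exact Subtype.ext (Quotient.sound h')
      · exact absurd (s.symm' h') h2'
      · exact absurd h' h1'
    · intro y
      induction y using Quotient.ind
      rename_i p
      by_cases hp : s.r p v
      · refine ⟨⟨Quotient.mk s u, fun hc => hne (Quotient.exact hc)⟩, ?_⟩
        show F _ = _
        rw [hF]
        exact Quotient.sound ((hiff u p).2 (Or.inr (Or.inl ⟨s.refl u, s.symm' hp⟩)))
      · exact ⟨⟨Quotient.mk s p, fun hc => hp (Quotient.exact hc)⟩, rfl⟩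
  have h1 : Nat.card {z : Quotient s // z ≠ Quotient.mk s v} = Nat.card (Quotient t) :=
    Nat.card_eq_of_bijective _ hbij
  have h2 : Nat.card (Quotient s) = Nat.card {z : Quotient s // z ≠ Quotient.mk s v} + 1 := by
    have e := (Equiv.optionSubtypeNe (Quotient.mk s v)).symm
    rw [Nat.card_congr e, Nat.card_congr (Equiv.optionEquivSumPUnit.{u_1,u_1} _), Nat.card_sum]
    simp
  omega

/-- Doubling: if each `t`-class is a union of exactly two `s`-classes distinguished by a
`Bool` invariant, the number of `s`-classes is twice the number of `t`-classes. -/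
lemma card_quotient_double (s t : Setoid S) (f : S → S) (D : S → Bool)
    (hiff : ∀ p q, t.r p q ↔ s.r p q ∨ s.r p (f q))
    (hd : ∀ p q, s.r p q → D p = D q)
    (hf : ∀ q, D (f q) ≠ D q) :
    Nat.card (Quotient s) = 2 * Nat.card (Quotient t) := by
  classical
  have hle : ∀ p q, s.r p q → t.r p q := fun p q h => (hiff p q).2 (Or.inl h)
  let Φ : Quotient s → Quotient t × Bool :=
    Quotient.lift (fun p => (Quotient.mk t p, D p))
      (fun p q h => by
        have := hd p q h
        have := Quotient.sound (hle p q h)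
        simp_all)
  have hbij : Function.Bijective Φ := by
    constructor
    · intro z1 z2 h
      induction z1 using Quotient.ind
      induction z2 using Quotient.ind
      rename_i p q
      simp only [Φ, Quotient.lift_mk, Prod.mk.injEq] at h
      obtain ⟨h1, h2⟩ := h
      have ht : t.r p q := Quotient.exact h1
      rcases (hiff p q).1 ht with h' | h'
      · exact Quotient.sound h'
      · exfalso
        have h3 := hd p (f q) h'
        rw [h2] at h3
        exact (hf q) h3.symm
    · rintro ⟨y, bb⟩
      induction y using Quotient.ind
      rename_i q
      by_cases hq : D q = bb
      · exact ⟨Quotient.mk s q, by simp [Φ, hq]⟩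
      · refine ⟨Quotient.mk s (f q), ?_⟩
        have h1 : t.r (f q) q := (hiff (f q) q).2 (Or.inr (s.refl (f q)))
        have h2 : D (f q) = bb := by
          have := hf q
          revert hq this
          cases D q <;> cases bb <;> cases D (f q) <;> simp
        simp only [Φ, Quotient.lift_mk, Prod.mk.injEq]
        exact ⟨Quotient.sound h1, h2⟩
  rw [Nat.card_eq_of_bijective _ hbij, Nat.card_prod]
  have : Nat.card Bool = 2 := by simp [Nat.card_eq_fintype_card]
  rw [this]; ring
end General
open Equiv Equiv.Perm

section Walks
variable {S : Type*} [Fintype S] [DecidableEq S]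

private lemma exists_min_pos {P : ℕ → Prop} (h : ∃ n, 0 < n ∧ P n) :
    ∃ n, 0 < n ∧ P n ∧ ∀ k, 0 < k → k < n → ¬ P k := by
  classical
  refine ⟨Nat.find h, (Nat.find_spec h).1, (Nat.find_spec h).2, fun k hk0 hkn hPk => ?_⟩
  exact Nat.find_min h hkn ⟨hk0, hPk⟩

lemma sameCycle_of_pow {π : Perm S} {p q : S} {k : ℕ} (h : (π ^ k) p = q) :
    π.SameCycle p q := ⟨(k : ℤ), by rw [zpow_natCast]; exact h⟩

/-- Splitting: if `u` and `v` lie on the same cycle of `π`, they lie on different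
cycles of `π * swap u v`. -/
lemma not_sameCycle_mul_swap {π : Perm S} {u v : S} (huv : u ≠ v)
    (h : π.SameCycle u v) : ¬ (π * Equiv.swap u v).SameCycle u v := by
  classical
  set π' := π * Equiv.swap u v with hπ'
  have hπ'app : ∀ z, π' z = π (Equiv.swap u v z) := fun z => rfl
  -- `u` is in the `π`-orbit of `v`
  obtain ⟨s, hs0, _, hs⟩ := (SameCycle.exists_pow_eq π h.symm)
  -- minimal positive `n` with `π^n v ∈ {u, v}`
  obtain ⟨n, hn0, hncase, hminP⟩ :=
    exists_min_pos (P := fun k => (π ^ k) v = u ∨ (π ^ k) v = v) ⟨s, hs0, Or.inl hs⟩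
  have hmin : ∀ k, 0 < k → k < n → (π ^ k) v ≠ u ∧ (π ^ k) v ≠ v := by
    intro k hk0 hkn
    have := hminP k hk0 hkn
    push_neg at this
    exact this
  -- in fact π^n v = u
  have hnu : (π ^ n) v = u := by
    rcases hncase with h' | h'
    · exact h'
    · exfalso
      have hdvd : ∀ k, (π ^ (k * n)) v = v := by
        intro k
        induction k with
        | zero => simp
        | succ k ih => rw [Nat.succ_mul, pow_add, Perm.mul_apply, h', ih]
      obtain ⟨q', r, hr, hsqr⟩ : ∃ q' r, r < n ∧ s = r + q' * n :=
        ⟨s / n, s % n, Nat.mod_lt _ hn0, by rw [Nat.add_comm, Nat.div_add_mod']⟩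
      have hru : (π ^ r) v = u := by
        rw [hsqr, pow_add, Perm.mul_apply, hdvd] at hs
        exact hs
      rcases Nat.eq_zero_or_pos r with hr0 | hr0
      · rw [hr0] at hru; simp at hru; exact huv hru.symm
      · exact (hmin r hr0 hr).1 hru
  -- π'^k u = π^k v for 1 ≤ k ≤ n
  have hwalk : ∀ k, 1 ≤ k → k ≤ n → (π' ^ k) u = (π ^ k) v := by
    intro k hk1 hkn
    induction k with
    | zero => omega
    | succ k ih =>
      rcases Nat.eq_zero_or_pos k with hk0 | hk0
      · subst hk0
        simp [hπ'app, pow_succ, Perm.mul_apply]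
      · have h1 : (π' ^ k) u = (π ^ k) v := ih hk0 (by omega)
        have h2 : (π ^ k) v ≠ u ∧ (π ^ k) v ≠ v := hmin k hk0 (by omega)
        simp only [pow_succ', Perm.mul_apply]
        rw [h1, hπ'app, Equiv.swap_apply_of_ne_of_ne h2.1 h2.2]
  have hret : (π' ^ n) u = u := by rw [hwalk n hn0 le_rfl, hnu]
  -- now suppose SameCycle π' u v
  intro hc
  obtain ⟨i, hi0, _, hi⟩ := SameCycle.exists_pow_eq π' hc
  obtain ⟨q', r, hr, hiqr⟩ : ∃ q' r, r < n ∧ i = r + q' * n :=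
    ⟨i / n, i % n, Nat.mod_lt _ hn0, by rw [Nat.add_comm, Nat.div_add_mod']⟩
  have hdvd' : ∀ k, (π' ^ (k * n)) u = u := by
    intro k
    induction k with
    | zero => simp
    | succ k ih => rw [Nat.succ_mul, pow_add, Perm.mul_apply, hret, ih]
  have hru : (π' ^ r) u = v := by
    rw [hiqr, pow_add, Perm.mul_apply, hdvd'] at hi
    exact hi
  rcases Nat.eq_zero_or_pos r with hr0 | hr0
  · rw [hr0] at hru; simp at hru; exact huv hru
  · rw [hwalk r hr0 (le_of_lt hr)] at hru
    exact (hmin r hr0 hr).2 hru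

/-- Merging: if `u` and `v` lie on different cycles of `π`, they lie on the same
cycle of `π * swap u v`. -/
lemma sameCycle_mul_swap_of_not {π : Perm S} {u v : S} (huv : u ≠ v)
    (h : ¬ π.SameCycle u v) : (π * Equiv.swap u v).SameCycle u v := by
  classical
  set π' := π * Equiv.swap u v with hπ'
  have hπ'app : ∀ z, π' z = π (Equiv.swap u v z) := fun z => rfl
  obtain ⟨n, hn0, hnu, hminP⟩ :=
    exists_min_pos (P := fun k => (π ^ k) u = u)
      ⟨orderOf π, orderOf_pos π, show (π ^ orderOf π) u = u by
        rw [pow_orderOf_eq_one]; rfl⟩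
  have hnev : ∀ k, 0 < k → (π ^ k) u ≠ v := by
    intro k hk0 hc
    exact h (sameCycle_of_pow hc)
  have hwalk : ∀ k, 1 ≤ k → k ≤ n → (π' ^ k) v = (π ^ k) u := by
    intro k hk1 hkn
    induction k with
    | zero => omega
    | succ k ih =>
      rcases Nat.eq_zero_or_pos k with hk0 | hk0
      · subst hk0
        simp [hπ'app, pow_succ, Perm.mul_apply]
      · have h1 : (π' ^ k) v = (π ^ k) u := ih hk0 (by omega)
        have h2 : (π ^ k) u ≠ u := hminP k hk0 (by omega)
        have h3 : (π ^ k) u ≠ v := hnev k hk0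
        simp only [pow_succ', Perm.mul_apply]
        rw [h1, hπ'app, Equiv.swap_apply_of_ne_of_ne h2 h3]
  have hfin : (π' ^ n) v = u := by rw [hwalk n hn0 le_rfl, hnu]
  exact (sameCycle_of_pow hfin).symm
end Walks
open Equiv Equiv.Perm

section Join
variable {S : Type*} [Fintype S] [DecidableEq S]

/-- The orbit relation of the subgroup generated by `π` and `swap u v`. -/
lemma orbitRel_closure_pair_iff (π : Perm S) (u v : S) (p q : S) :
    (MulAction.orbitRel (Subgroup.closure {π, Equiv.swap u v} : Subgroup (Perm S)) S).r p q ↔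
      π.SameCycle p q ∨ (π.SameCycle p u ∧ π.SameCycle v q) ∨
        (π.SameCycle p v ∧ π.SameCycle u q) := by
  classical
  set H : Subgroup (Perm S) := Subgroup.closure {π, Equiv.swap u v} with hH
  have hπH : π ∈ H := Subgroup.subset_closure (by simp)
  have hsH : Equiv.swap u v ∈ H := Subgroup.subset_closure (by simp)
  -- abbreviation for the RHS relation
  set r : S → S → Prop := fun p q => π.SameCycle p q ∨ (π.SameCycle p u ∧ π.SameCycle v q) ∨
    (π.SameCycle p v ∧ π.SameCycle u q) with hr
  have hrrefl : ∀ p, r p p := fun p => Or.inl (SameCycle.refl π p)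
  have hrsymm : ∀ p q, r p q → r q p := by
    rintro p q (h | ⟨h1, h2⟩ | ⟨h1, h2⟩)
    · exact Or.inl h.symm
    · exact Or.inr (Or.inr ⟨h2.symm, h1.symm⟩)
    · exact Or.inr (Or.inl ⟨h2.symm, h1.symm⟩)
  have hrtrans : ∀ p q z, r p q → r q z → r p z := by
    rintro p q z (h | ⟨h1, h2⟩ | ⟨h1, h2⟩) (h' | ⟨h1', h2'⟩ | ⟨h1', h2'⟩)
    · exact Or.inl (h.trans h')
    · exact Or.inr (Or.inl ⟨h.trans h1', h2'⟩)
    · exact Or.inr (Or.inr ⟨h.trans h1', h2'⟩)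
    · exact Or.inr (Or.inl ⟨h1, h2.trans h'⟩)
    · exact Or.inl ((h1.trans (h1'.symm.trans h2.symm)).trans h2')
    · exact Or.inl (h1.trans h2')
    · exact Or.inr (Or.inr ⟨h1, h2.trans h'⟩)
    · exact Or.inl (h1.trans h2')
    · exact Or.inl ((h1.trans (h1'.symm.trans h2.symm)).trans h2')
  constructor
  · intro hpq
    -- p ∈ orbit q
    obtain ⟨⟨g, hg⟩, hgq⟩ := MulAction.mem_orbit_iff.1 hpq
    have key : ∀ g : Perm S, g ∈ H → ∀ q, r (g q) q := by
      intro g hg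
      refine Subgroup.closure_induction ?_ ?_ ?_ ?_ hg
      · intro g' hg' q
        rcases hg' with rfl | rfl
        · exact Or.inl (Equiv.Perm.sameCycle_apply_left.2 (SameCycle.refl _ q))
        · rcases eq_or_ne q u with rfl | hqu
          · rw [Equiv.swap_apply_left]
            exact Or.inr (Or.inr ⟨SameCycle.refl π v, SameCycle.refl π q⟩)
          · rcases eq_or_ne q v with rfl | hqv
            · rw [Equiv.swap_apply_right]
              exact Or.inr (Or.inl ⟨SameCycle.refl π u, SameCycle.refl π q⟩)
            · rw [Equiv.swap_apply_of_ne_of_ne hqu hqv]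
              exact hrrefl q
      · intro q; exact hrrefl q
      · intro g1 g2 hg1 hg2 ih1 ih2 q
        have := ih1 (g2 q)
        have := ih2 q
        exact hrtrans _ _ _ (by simpa using ih1 (g2 q)) (ih2 q)
      · intro g1 hg1 ih q
        have := ih (g1⁻¹ q)
        simp only [Perm.coe_inv, Equiv.apply_symm_apply] at this
        exact hrsymm _ _ this
    have := key g hg q
    rw [show g q = p from hgq] at this
    exact this
  · rintro (h | ⟨h1, h2⟩ | ⟨h1, h2⟩)
    · obtain ⟨i, hi⟩ := h.symm
      exact MulAction.mem_orbit_iff.2 ⟨⟨π ^ i, Subgroup.zpow_mem H hπH i⟩, hi⟩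
    · -- p ~ u, v ~ q : p = π^i u, v = π^j q; p = π^i (swap (π^j q))
      obtain ⟨i, hi⟩ := h1.symm
      obtain ⟨j, hj⟩ := h2
      refine MulAction.mem_orbit_iff.2 ⟨⟨(π ^ i) * Equiv.swap u v * (π ^ j)⁻¹, ?_⟩, ?_⟩
      · exact H.mul_mem (H.mul_mem (Subgroup.zpow_mem H hπH i) hsH)
          (H.inv_mem (Subgroup.zpow_mem H hπH j))
      · show ((π ^ i) * Equiv.swap u v * (π ^ j)⁻¹) q = p
        have hq : (π ^ j)⁻¹ q = v := by rw [← hj]; simp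
        simp only [Perm.mul_apply, hq, Equiv.swap_apply_right]
        exact hi
    · obtain ⟨i, hi⟩ := h1.symm
      obtain ⟨j, hj⟩ := h2
      refine MulAction.mem_orbit_iff.2 ⟨⟨(π ^ i) * Equiv.swap u v * (π ^ j)⁻¹, ?_⟩, ?_⟩
      · exact H.mul_mem (H.mul_mem (Subgroup.zpow_mem H hπH i) hsH)
          (H.inv_mem (Subgroup.zpow_mem H hπH j))
      · show ((π ^ i) * Equiv.swap u v * (π ^ j)⁻¹) q = p
        have hq : (π ^ j)⁻¹ q = u := by rw [← hj]; simp
        simp only [Perm.mul_apply, hq, Equiv.swap_apply_left]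
        exact hi

lemma closure_pair_swap_eq (π : Perm S) (u v : S) :
    (Subgroup.closure {π, Equiv.swap u v} : Subgroup (Perm S)) =
      Subgroup.closure {π * Equiv.swap u v, Equiv.swap u v} := by
  apply le_antisymm
  · rw [Subgroup.closure_le]
    intro g hg
    rcases hg with h | h
    · have h1 : (π * Equiv.swap u v) * Equiv.swap u v = π := by
        rw [mul_assoc, Equiv.swap_mul_self, mul_one]
      rw [h, ← h1]
      exact Subgroup.mul_mem _ (Subgroup.subset_closure (by simp))
        (Subgroup.subset_closure (by simp))
    · rw [h]; exact Subgroup.subset_closure (by simp)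
  · rw [Subgroup.closure_le]
    intro g hg
    rcases hg with h | h
    · rw [h]
      exact Subgroup.mul_mem _ (Subgroup.subset_closure (by simp))
        (Subgroup.subset_closure (by simp))
    · rw [h]; exact Subgroup.subset_closure (by simp)
end Join
open Equiv Equiv.Perm

section Dihedral
variable {S : Type*} [Fintype S] [DecidableEq S]

/-- Orbit relation of the group generated by two involutions, in terms of the
cycles of their product. -/
lemma orbitRel_closure_invol_pair_iff (a b : Perm S) (ha : a * a = 1) (hb : b * b = 1)
    (p q : S) :
    (MulAction.orbitRel (Subgroup.closure {a, b} : Subgroup (Perm S)) S).r p q ↔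
      (a * b).SameCycle p q ∨ (a * b).SameCycle p (a q) := by
  classical
  set ρ : Perm S := a * b with hρ
  have hainv : a⁻¹ = a := inv_eq_of_mul_eq_one_right ha
  have hbinv : b⁻¹ = b := inv_eq_of_mul_eq_one_right hb
  have haa : ∀ z, a (a z) = z := by
    intro z
    have : (a * a) z = (1 : Perm S) z := by rw [ha]
    simpa using this
  have hconj : ∀ z w, ρ.SameCycle (a z) (a w) ↔ ρ.SameCycle z w := by
    intro z w
    have h1 : a * ρ * a⁻¹ = ρ⁻¹ := by
      rw [hρ, mul_inv_rev, hainv, hbinv]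
      calc a * (a * b) * a = ((a * a) * b) * a := by group
        _ = b * a := by rw [ha, one_mul]
    have h2 := Equiv.Perm.sameCycle_conj (f := ρ) (g := a) (x := a z) (y := a w)
    rw [h1, Equiv.Perm.sameCycle_inv] at h2
    have e1 : a⁻¹ (a z) = z := by rw [hainv]; exact haa z
    have e2 : a⁻¹ (a w) = w := by rw [hainv]; exact haa w
    rw [e1, e2] at h2
    exact h2
  -- also need the raw version
  have hconj' : ∀ z w, ρ.SameCycle z w → ρ.SameCycle (a z) (a w) := fun z w h =>
    (hconj z w).2 h
  set H : Subgroup (Perm S) := Subgroup.closure {a, b} with hH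
  have haH : a ∈ H := Subgroup.subset_closure (by simp)
  have hbH : b ∈ H := Subgroup.subset_closure (by simp)
  have hρH : ρ ∈ H := H.mul_mem haH hbH
  set r : S → S → Prop := fun p q => ρ.SameCycle p q ∨ ρ.SameCycle p (a q) with hr
  have hrrefl : ∀ p, r p p := fun p => Or.inl (SameCycle.refl ρ p)
  have hrsymm : ∀ p q, r p q → r q p := by
    rintro p q (h | h)
    · exact Or.inl h.symm
    · right
      have := hconj' _ _ h.symm
      rwa [haa q] at this
  have hrtrans : ∀ p q z, r p q → r q z → r p z := by
    rintro p q z (h | h) (h' | h')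
    · exact Or.inl (h.trans h')
    · exact Or.inr (h.trans h')
    · exact Or.inr (h.trans ((hconj' _ _ h'))) -- h : p ~ a q, h' : q ~ z ⇒ a q ~ a z
    · left
      have h2 := hconj' _ _ h'
      rw [haa z] at h2
      exact h.trans h2
  constructor
  · intro hpq
    obtain ⟨⟨g, hg⟩, hgq⟩ := MulAction.mem_orbit_iff.1 hpq
    have key : ∀ g : Perm S, g ∈ H → ∀ q, r (g q) q := by
      intro g hg
      refine Subgroup.closure_induction ?_ ?_ ?_ ?_ hg
      · intro g' hg' q
        have hbb : ∀ z, b (b z) = z := by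
          intro z
          have : (b * b) z = (1 : Perm S) z := by rw [hb]
          simpa using this
        rcases hg' with h | h
        · rw [h]
          exact Or.inr (SameCycle.refl ρ (a q))
        · rw [h]
          right
          have hsc : ρ.SameCycle (b q) (ρ (b q)) :=
            Equiv.Perm.sameCycle_apply_right.2 (SameCycle.refl _ _)
          have heq : ρ (b q) = a q := by
            show a (b (b q)) = a q
            rw [hbb]
          rwa [heq] at hsc
      · intro q; exact hrrefl q
      · intro g1 g2 hg1 hg2 ih1 ih2 q
        exact hrtrans _ _ _ (ih1 (g2 q)) (ih2 q)
      · intro g1 hg1 ih q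
        have := ih (g1⁻¹ q)
        simp only [Perm.coe_inv, Equiv.apply_symm_apply] at this
        exact hrsymm _ _ this
    have := key g hg q
    rw [show g q = p from hgq] at this
    exact this
  · rintro (h | h)
    · obtain ⟨i, hi⟩ := h.symm
      exact MulAction.mem_orbit_iff.2 ⟨⟨ρ ^ i, Subgroup.zpow_mem H hρH i⟩, hi⟩
    · obtain ⟨i, hi⟩ := h.symm
      refine MulAction.mem_orbit_iff.2 ⟨⟨ρ ^ i * a, ?_⟩, ?_⟩
      · exact H.mul_mem (Subgroup.zpow_mem H hρH i) haH
      · show (ρ ^ i) (a q) = p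
        exact hi
end Dihedral

section T
variable {S : Type*} [Fintype S] [DecidableEq S]

lemma D_eq_of_sameCycle {π : Perm S} {D : S → Bool} (hD : ∀ z, D (π z) = D z)
    {p q : S} (h : π.SameCycle p q) : D p = D q := by
  obtain ⟨i, hi⟩ := h
  have hDinv : ∀ z, D (π⁻¹ z) = D z := by
    intro z
    have h2 := hD (π⁻¹ z)
    rw [Perm.coe_inv, Equiv.apply_symm_apply] at h2
    exact h2.symm
  have key : ∀ i : ℤ, ∀ z, D ((π ^ i) z) = D z := by
    intro i
    induction i using Int.induction_on with
    | zero => simp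
    | succ k ih =>
      intro z
      have : (π ^ ((k : ℤ) + 1)) z = (π ^ (k : ℤ)) (π z) := by
        rw [zpow_add_one, Perm.mul_apply]
      rw [this, ih (π z), hD z]
    | pred k ih =>
      intro z
      have : (π ^ (-(k : ℤ) - 1)) z = (π ^ (-(k : ℤ))) (π⁻¹ z) := by
        rw [zpow_sub_one, Perm.mul_apply]
      rw [this, ih (π⁻¹ z), hDinv z]
  rw [← hi, key i p]

lemma cyc_mul_swap_of_sameCycle {π : Perm S} {u v : S} (huv : u ≠ v)
    (h : π.SameCycle u v) : cyc (π * Equiv.swap u v) = cyc π + 1 := by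
  classical
  set π' := π * Equiv.swap u v with hπ'
  set H : Subgroup (Perm S) := Subgroup.closure {π, Equiv.swap u v} with hH
  set t : Setoid S := MulAction.orbitRel H S with ht
  have h1 : cyc π = Nat.card (Quotient t) := by
    apply card_quotient_eq_of_rel_iff
    intro p q
    rw [ht, orbitRel_closure_pair_iff π u v p q]
    show π.SameCycle p q ↔ _
    constructor
    · exact Or.inl
    · rintro (h' | ⟨ha, hb⟩ | ⟨ha, hb⟩)
      · exact h'
      · exact (ha.trans h).trans hb
      · exact (ha.trans h.symm).trans hb
  have hne : ¬ π'.SameCycle u v := not_sameCycle_mul_swap huv h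
  have h2 : cyc π' = Nat.card (Quotient t) + 1 := by
    have hiff : ∀ p q, t.r p q ↔ π'.SameCycle p q ∨ (π'.SameCycle p u ∧ π'.SameCycle v q) ∨
        (π'.SameCycle p v ∧ π'.SameCycle u q) := by
      intro p q
      rw [ht, hH, closure_pair_swap_eq π u v]
      exact orbitRel_closure_pair_iff π' u v p q
    exact card_quotient_merge (scSetoid π') t u v hne hiff
  rw [h2, ← h1]

lemma cyc_mul_swap_of_not_sameCycle {π : Perm S} {u v : S} (huv : u ≠ v)
    (h : ¬ π.SameCycle u v) : cyc π = cyc (π * Equiv.swap u v) + 1 := by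
  classical
  set π' := π * Equiv.swap u v with hπ'
  set H : Subgroup (Perm S) := Subgroup.closure {π, Equiv.swap u v} with hH
  set t : Setoid S := MulAction.orbitRel H S with ht
  have h1 : cyc π = Nat.card (Quotient t) + 1 :=
    card_quotient_merge (scSetoid π) t u v h (fun p q => by
      rw [ht]; exact orbitRel_closure_pair_iff π u v p q)
  have hsc : π'.SameCycle u v := sameCycle_mul_swap_of_not huv h
  have h2 : cyc π' = Nat.card (Quotient t) := by
    apply card_quotient_eq_of_rel_iff
    intro p q
    have hiff : t.r p q ↔ π'.SameCycle p q ∨ (π'.SameCycle p u ∧ π'.SameCycle v q) ∨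
        (π'.SameCycle p v ∧ π'.SameCycle u q) := by
      rw [ht, hH, closure_pair_swap_eq π u v]
      exact orbitRel_closure_pair_iff π' u v p q
    rw [hiff]
    show π'.SameCycle p q ↔ _
    constructor
    · exact Or.inl
    · rintro (h' | ⟨ha, hb⟩ | ⟨ha, hb⟩)
      · exact h'
      · exact (ha.trans hsc).trans hb
      · exact (ha.trans hsc.symm).trans hb
  rw [h1, h2]

lemma sameCycle_mul_swap_iff {π : Perm S} {u v p q : S} (D : S → Bool)
    (hD : ∀ z, D (π z) = D z) (huv : D u = D v)
    (hp : D p ≠ D u) (hq : D q ≠ D u) :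
    (π * Equiv.swap u v).SameCycle p q ↔ π.SameCycle p q := by
  classical
  set π' := π * Equiv.swap u v with hπ'
  have hD' : ∀ z, D (π' z) = D z := by
    intro z
    show D (π (Equiv.swap u v z)) = D z
    rw [hD]
    rcases eq_or_ne z u with rfl | hzu
    · rw [Equiv.swap_apply_left]; exact huv.symm
    · rcases eq_or_ne z v with rfl | hzv
      · rw [Equiv.swap_apply_right]; exact huv
      · rw [Equiv.swap_apply_of_ne_of_ne hzu hzv]
  have hJ := orbitRel_closure_pair_iff π u v p q
  have hJ' : (MulAction.orbitRel (Subgroup.closure {π, Equiv.swap u v} : Subgroup (Perm S)) S).r p q ↔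
      π'.SameCycle p q ∨ (π'.SameCycle p u ∧ π'.SameCycle v q) ∨
        (π'.SameCycle p v ∧ π'.SameCycle u q) := by
    rw [closure_pair_swap_eq π u v]
    exact orbitRel_closure_pair_iff π' u v p q
  constructor
  · intro h
    rcases hJ.1 (hJ'.2 (Or.inl h)) with h' | ⟨ha, _⟩ | ⟨ha, _⟩
    · exact h'
    · exact absurd (D_eq_of_sameCycle hD ha) hp
    · exact absurd ((D_eq_of_sameCycle hD ha).trans huv.symm) hp
  · intro h
    rcases hJ'.1 (hJ.2 (Or.inl h)) with h' | ⟨ha, _⟩ | ⟨ha, _⟩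
    · exact h'
    · exact absurd (D_eq_of_sameCycle hD' ha) hp
    · exact absurd ((D_eq_of_sameCycle hD' ha).trans huv.symm) hp
end T
section Conj
variable {S : Type*} [Fintype S] [DecidableEq S]

lemma sameCycle_conj_invol (a b : Equiv.Perm S) (ha : a * a = 1) (hb : b * b = 1)
    (z w : S) : (a * b).SameCycle (b z) (b w) ↔ (a * b).SameCycle z w := by
  have hbinv : b⁻¹ = b := inv_eq_of_mul_eq_one_right hb
  have hbb : ∀ y, b (b y) = y := by
    intro y
    have : (b * b) y = (1 : Equiv.Perm S) y := by rw [hb]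
    simpa using this
  have hainv : a⁻¹ = a := inv_eq_of_mul_eq_one_right ha
  have h1 : b * (a * b) * b⁻¹ = (a * b)⁻¹ := by
    rw [mul_inv_rev, hainv, hbinv]
    calc b * (a * b) * b = (b * a) * (b * b) := by group
      _ = b * a := by rw [hb, mul_one]
  have h2 := Equiv.Perm.sameCycle_conj (f := a * b) (g := b) (x := b z) (y := b w)
  rw [h1, Equiv.Perm.sameCycle_inv] at h2
  have e1 : b⁻¹ (b z) = z := by rw [hbinv]; exact hbb z
  have e2 : b⁻¹ (b w) = w := by rw [hbinv]; exact hbb w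
  rw [e1, e2] at h2
  exact h2
end Conj

/-- For a signed chord diagram whose underlying chord diagram is orientable, changing
the marker of a state on a single chord `{x, τ x}` changes the number of components of
the smoothing by exactly one. -/
theorem numComponents_changeMarker_of_orientable
    {E : Type*} [Fintype E] [DecidableEq E]
    (σ τ : Equiv.Perm E) (ε : E → Bool)
    (hτ : ∀ y : E, τ (τ y) = y) (hτfix : ∀ y : E, τ y ≠ y)
    (hε : ∀ y : E, ε (τ y) = ε y)
    (hor : Orientable σ τ)
    (m m' : E → Bool)
    (hm : ∀ y : E, m (τ y) = m y) (hm' : ∀ y : E, m' (τ y) = m' y)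
    (x : E)
    (hx : m' x = !(m x)) (hτx : m' (τ x) = !(m (τ x)))
    (hother : ∀ y : E, y ≠ x → y ≠ τ x → m' y = m y) :
    numComponents σ τ ε m' hτ hε hm' = numComponents σ τ ε m hτ hε hm + 1 ∨
      numComponents σ τ ε m hτ hε hm = numComponents σ τ ε m' hτ hε hm' + 1 := by
  classical
  obtain ⟨c, hc⟩ := hor
  set α : Equiv.Perm (E × Bool) := alphaPerm σ with hα
  set μ : Equiv.Perm (E × Bool) := muPerm τ ε m hτ hε hm with hμ
  set μ' : Equiv.Perm (E × Bool) := muPerm τ ε m' hτ hε hm' with hμ'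
  have hαapp : ∀ p : E × Bool, α p = if p.2 then ((σ⁻¹ p.1 : E), false) else (σ p.1, true) :=
    fun p => rfl
  have hμapp : ∀ p : E × Bool, μ p = (τ p.1, if m p.1 = ε p.1 then !p.2 else p.2) :=
    fun p => rfl
  have hμ'app : ∀ p : E × Bool, μ' p = (τ p.1, if m' p.1 = ε p.1 then !p.2 else p.2) :=
    fun p => rfl
  have hαα : α * α = 1 := by
    ext p
    · show (α (α p)).1 = p.1
      rcases p with ⟨y, _ | _⟩ <;> simp [hαapp]
    · show ((α (α p)).2 : Bool) = p.2
      rcases p with ⟨y, _ | _⟩ <;> simp [hαapp]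
  have hμμgen : ∀ (mm : E → Bool) (hmm : ∀ y, mm (τ y) = mm y),
      muPerm τ ε mm hτ hε hmm * muPerm τ ε mm hτ hε hmm = 1 := by
    intro mm hmm
    ext p
    · show (muPerm τ ε mm hτ hε hmm (muPerm τ ε mm hτ hε hmm p)).1 = p.1
      show τ (τ p.1) = p.1
      exact hτ p.1
    · show ((muPerm τ ε mm hτ hε hmm (muPerm τ ε mm hτ hε hmm p)).2 : Bool) = p.2
      show (if mm (τ p.1) = ε (τ p.1) then
          !(if mm p.1 = ε p.1 then !p.2 else p.2) else (if mm p.1 = ε p.1 then !p.2 else p.2)) = p.2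
      rw [hmm, hε]
      by_cases h : mm p.1 = ε p.1 <;> simp [h]
  have hμμ : μ * μ = 1 := hμμgen m hm
  have hμ'μ' : μ' * μ' = 1 := hμμgen m' hm'
  set ρ : Equiv.Perm (E × Bool) := α * μ with hρ
  set ρ' : Equiv.Perm (E × Bool) := α * μ' with hρ'
  set D2 : E × Bool → Bool := fun p => c p.1 with hD2
  have hD2α : ∀ p, D2 (α p) ≠ D2 p := by
    rintro ⟨y, _ | _⟩
    · show c (σ y) ≠ c y
      exact (hc y).1
    · show c (σ⁻¹ y) ≠ c y
      intro h
      have := (hc (σ⁻¹ y)).1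
      rw [Perm.coe_inv, Equiv.apply_symm_apply] at this
      exact this h.symm
  have hboolne : ∀ r s t : Bool, r ≠ s → s ≠ t → r = t := by decide
  have hD2ρgen : ∀ (mm : E → Bool) (hmm : ∀ y, mm (τ y) = mm y) (p : E × Bool),
      D2 ((α * muPerm τ ε mm hτ hε hmm) p) = D2 p := by
    intro mm hmm p
    have h1 : D2 (muPerm τ ε mm hτ hε hmm p) ≠ D2 p := by
      show c (τ p.1) ≠ c p.1
      exact (hc p.1).2
    have h2 : D2 (α (muPerm τ ε mm hτ hε hmm p)) ≠ D2 (muPerm τ ε mm hτ hε hmm p) :=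
      hD2α _
    exact hboolne _ _ _ h2 h1
  have hD2ρ : ∀ p, D2 (ρ p) = D2 p := hD2ρgen m hm
  have hD2ρ' : ∀ p, D2 (ρ' p) = D2 p := hD2ρgen m' hm'
  -- the four points at the modified chord
  set a1 : E × Bool := (x, true) with ha1
  set a2 : E × Bool := (x, false) with ha2
  set a3 : E × Bool := (τ x, true) with ha3
  set a4 : E × Bool := (τ x, false) with ha4
  have hxτx : τ x ≠ x := hτfix x
  have hab : a1 ≠ a2 := by simp [ha1, ha2]
  have hcd : a3 ≠ a4 := by simp [ha3, ha4]
  -- μ' = μ * swap a1 a2 * swap a3 a4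
  have hne3 : ∀ bb bb' : Bool, ((x, bb) : E × Bool) ≠ (τ x, bb') := by
    intro bb bb' hcontra
    exact hxτx (congrArg Prod.fst hcontra).symm
  have hne3' : ∀ bb bb' : Bool, ((τ x, bb) : E × Bool) ≠ (x, bb') := by
    intro bb bb' hcontra
    exact hxτx (congrArg Prod.fst hcontra)
  have key : ∀ p : E × Bool, μ' p = μ (Equiv.swap a1 a2 (Equiv.swap a3 a4 p)) := by
    rintro ⟨y, bb⟩
    by_cases hyx : y = x
    · rw [hyx]
      have hs4 : Equiv.swap a3 a4 (x, bb) = (x, bb) :=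
        Equiv.swap_apply_of_ne_of_ne (hne3 bb true) (hne3 bb false)
      have hs2 : Equiv.swap a1 a2 ((x : E), bb) = (x, !bb) := by
        cases bb
        · show Equiv.swap a1 a2 a2 = a1
          exact Equiv.swap_apply_right a1 a2
        · show Equiv.swap a1 a2 a1 = a2
          exact Equiv.swap_apply_left a1 a2
      rw [hs4, hs2, hμ'app, hμapp, hx]
      cases m x <;> cases ε x <;> cases bb <;> simp
    · by_cases hyτx : y = τ x
      · rw [hyτx]
        have hs4 : Equiv.swap a3 a4 ((τ x : E), bb) = (τ x, !bb) := by
          cases bb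
          · show Equiv.swap a3 a4 a4 = a3
            exact Equiv.swap_apply_right a3 a4
          · show Equiv.swap a3 a4 a3 = a4
            exact Equiv.swap_apply_left a3 a4
        have hs2 : Equiv.swap a1 a2 ((τ x : E), !bb) = (τ x, !bb) :=
          Equiv.swap_apply_of_ne_of_ne (hne3' (!bb) true) (hne3' (!bb) false)
        rw [hs4, hs2, hμ'app, hμapp]
        show ((τ (τ x) : E), if m' (τ x) = ε (τ x) then !bb else bb) =
          ((τ (τ x) : E), if m (τ x) = ε (τ x) then !(!bb) else !bb)
        rw [hτx]
        cases m (τ x) <;> cases ε (τ x) <;> cases bb <;> simp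
      · have hs4 : Equiv.swap a3 a4 (y, bb) = (y, bb) :=
          Equiv.swap_apply_of_ne_of_ne
            (fun hcontra => hyτx (congrArg Prod.fst hcontra))
            (fun hcontra => hyτx (congrArg Prod.fst hcontra))
        have hs2 : Equiv.swap a1 a2 (y, bb) = (y, bb) :=
          Equiv.swap_apply_of_ne_of_ne
            (fun hcontra => hyx (congrArg Prod.fst hcontra))
            (fun hcontra => hyx (congrArg Prod.fst hcontra))
        rw [hs4, hs2, hμ'app, hμapp, hother y hyx hyτx]
  have hμ'w : μ' = μ * Equiv.swap a1 a2 * Equiv.swap a3 a4 :=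
    Equiv.ext (fun p => key p)
  have hρ'w : ρ' = ρ * Equiv.swap a1 a2 * Equiv.swap a3 a4 := by
    rw [hρ', hμ'w, hρ]
    group
  -- SameCycle ρ a1 a2 ↔ SameCycle ρ a3 a4 via conjugation by μ
  have hconjμ : ∀ z w, ρ.SameCycle (μ z) (μ w) ↔ ρ.SameCycle z w := fun z w =>
    sameCycle_conj_invol α μ hαα hμμ z w
  have hF5 : ρ.SameCycle a1 a2 ↔ ρ.SameCycle a3 a4 := by
    rw [← hconjμ a1 a2]
    by_cases h : m x = ε x
    · have e1 : μ a1 = a4 := by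
        show (τ x, if m x = ε x then !true else true) = a4
        rw [if_pos h]
        try rfl
      have e2 : μ a2 = a3 := by
        show (τ x, if m x = ε x then !false else false) = a3
        rw [if_pos h]
        try rfl
      rw [e1, e2]
      exact ⟨fun h' => h'.symm, fun h' => h'.symm⟩
    · have e1 : μ a1 = a3 := by
        show (τ x, if m x = ε x then !true else true) = a3
        rw [if_neg h]
        try rfl
      have e2 : μ a2 = a4 := by
        show (τ x, if m x = ε x then !false else false) = a4
        rw [if_neg h]
        try rfl
      rw [e1, e2]
  -- counting: cyc ρ = 2 * numComponents
  have hcountgen : ∀ (mm : E → Bool) (hmm : ∀ y, mm (τ y) = mm y),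
      cyc (α * muPerm τ ε mm hτ hε hmm) = 2 * numComponents σ τ ε mm hτ hε hmm := by
    intro mm hmm
    apply card_quotient_double (scSetoid (α * muPerm τ ε mm hτ hε hmm))
      (MulAction.orbitRel (Subgroup.closure {α, muPerm τ ε mm hτ hε hmm} :
        Subgroup (Equiv.Perm (E × Bool))) (E × Bool)) (⇑α) D2
    · intro p q
      exact (orbitRel_closure_invol_pair_iff α (muPerm τ ε mm hτ hε hmm) hαα
        (hμμgen mm hmm) p q).symm.symm
    · intro p q h
      exact D_eq_of_sameCycle (hD2ρgen mm hmm) h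
    · exact hD2α
  have hcount : cyc ρ = 2 * numComponents σ τ ε m hτ hε hm := hcountgen m hm
  have hcount' : cyc ρ' = 2 * numComponents σ τ ε m' hτ hε hm' := hcountgen m' hm'
  -- D2 values at the four points
  have hval12 : D2 a1 = D2 a2 := rfl
  have hval31 : D2 a3 ≠ D2 a1 := (hc x).2
  have hval41 : D2 a4 ≠ D2 a1 := (hc x).2
  by_cases hsc : ρ.SameCycle a1 a2
  · left
    have c1 : cyc (ρ * Equiv.swap a1 a2) = cyc ρ + 1 := cyc_mul_swap_of_sameCycle hab hsc
    have hcc : ρ.SameCycle a3 a4 := hF5.1 hsc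
    have htr : (ρ * Equiv.swap a1 a2).SameCycle a3 a4 :=
      (sameCycle_mul_swap_iff D2 hD2ρ hval12 hval31 hval41).2 hcc
    have c2 : cyc (ρ * Equiv.swap a1 a2 * Equiv.swap a3 a4) = cyc (ρ * Equiv.swap a1 a2) + 1 :=
      cyc_mul_swap_of_sameCycle hcd htr
    rw [← hρ'w] at c2
    omega
  · right
    have c1 : cyc ρ = cyc (ρ * Equiv.swap a1 a2) + 1 := cyc_mul_swap_of_not_sameCycle hab hsc
    have hcc : ¬ ρ.SameCycle a3 a4 := fun h => hsc (hF5.2 h)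
    have htr : ¬ (ρ * Equiv.swap a1 a2).SameCycle a3 a4 := fun h =>
      hcc ((sameCycle_mul_swap_iff D2 hD2ρ hval12 hval31 hval41).1 h)
    have c2 : cyc (ρ * Equiv.swap a1 a2) = cyc (ρ * Equiv.swap a1 a2 * Equiv.swap a3 a4) + 1 :=
      cyc_mul_swap_of_not_sameCycle hcd htr
    rw [← hρ'w] at c2
    omega
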